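/- Let n ≥ 1 and let a : ℝ → ℝ^{n−1}, b : ℝ → ℝⁿ be differentiable, with the convention a_0 := 0, a_n := 0. Define the symmetric tridiagonal matrix L(t) with L_{kk} = b_k, L_{k,k+1} = L_{k+1,k} = a_k and all other entries zero, and the skew-symmetric tridiagonal matrix B(t) with B_{k,k+1} = a_k, B_{k+1,k} = −a_k and all other entries zero. Then L'(t) = B(t)L(t) − L(t)B(t) for all t if and only if ȧ_k = a_k(b_{k+1} − b_k) for k = 1,…,n−1 and ḃ_k = 2(a_k² − a_{k−1}²) for k = 1,…,n. -/
import Mathlib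


open Matrix Finset


def todaLf (a b : ℕ → ℝ) (i j : ℕ) : ℝ :=
  if i = j then b (i + 1)
  else if i + 1 = j then a (i + 1)
  else if j + 1 = i then a (j + 1)
  else 0

def todaBf (a : ℕ → ℝ) (i j : ℕ) : ℝ :=
  if i + 1 = j then a (i + 1)
  else if j + 1 = i then -(a (j + 1))
  else 0

lemma todaSumBL (n : ℕ) (a b : ℕ → ℝ) (ha0 : a 0 = 0) (han : a n = 0)
    (i j : ℕ) (hi : i < n) :
    ∑ k ∈ range n, todaBf a i k * todaLf a b k j
      = a (i+1) * todaLf a b (i+1) j - a i * todaLf a b (i-1) j := by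
  have hsplit : ∀ k, todaBf a i k * todaLf a b k j =
      (if k = i + 1 then a (i+1) * todaLf a b (i+1) j else 0)
      + (if i = 0 then 0 else if k = i - 1 then -(a i * todaLf a b (i-1) j) else 0) := by
    intro k
    unfold todaBf
    by_cases h1 : i + 1 = k
    · rw [if_pos h1]
      subst h1
      rw [if_pos rfl]
      by_cases h0 : i = 0
      · rw [if_pos h0]; ring
      · rw [if_neg h0, if_neg (by omega : ¬ i + 1 = i - 1)]; ring
    · rw [if_neg h1, if_neg (by omega : ¬ k = i + 1)]
      by_cases h2 : k + 1 = i
      · rw [if_pos h2, if_neg (by omega : ¬ i = 0), if_pos (by omega : k = i - 1)]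
        rw [show i - 1 = k by omega, ← h2]
        ring
      · rw [if_neg h2]
        by_cases h0 : i = 0
        · rw [if_pos h0]; ring
        · rw [if_neg h0, if_neg (by omega : ¬ k = i - 1)]; ring
  rw [Finset.sum_congr rfl fun k _ => hsplit k, Finset.sum_add_distrib]
  rw [Finset.sum_ite_eq' (range n) (i+1) (fun _ => a (i+1) * todaLf a b (i+1) j)]
  have hA : (if i + 1 ∈ range n then a (i+1) * todaLf a b (i+1) j else 0)
      = a (i+1) * todaLf a b (i+1) j := by
    split_ifs with h
    · rfl
    · rw [show i + 1 = n by simp only [Finset.mem_range] at h; omega, han]; ring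
  rw [hA]
  by_cases h0 : i = 0
  · subst h0
    simp [ha0]
  · simp only [if_neg h0]
    rw [Finset.sum_ite_eq' (range n) (i-1) (fun _ => -(a i * todaLf a b (i-1) j))]
    rw [if_pos (Finset.mem_range.2 (by omega))]
    ring

lemma todaSumLB (n : ℕ) (a b : ℕ → ℝ) (ha0 : a 0 = 0) (han : a n = 0)
    (i j : ℕ) (hj : j < n) :
    ∑ k ∈ range n, todaLf a b i k * todaBf a k j
      = a j * todaLf a b i (j-1) - a (j+1) * todaLf a b i (j+1) := by
  have hsplit : ∀ k, todaLf a b i k * todaBf a k j =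
      (if j = 0 then 0 else if k = j - 1 then a j * todaLf a b i (j-1) else 0)
      + (if k = j + 1 then -(a (j+1) * todaLf a b i (j+1)) else 0) := by
    intro k
    unfold todaBf
    by_cases h1 : k + 1 = j
    · rw [if_pos h1, if_neg (by omega : ¬ j = 0), if_pos (by omega : k = j - 1),
        if_neg (by omega : ¬ k = j + 1)]
      rw [show j - 1 = k by omega, ← h1]
      ring
    · rw [if_neg h1]
      by_cases h2 : j + 1 = k
      · rw [if_pos h2, if_pos (by omega : k = j + 1)]
        subst h2
        by_cases h0 : j = 0
        · rw [if_pos h0]; ring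
        · rw [if_neg h0, if_neg (by omega : ¬ j + 1 = j - 1)]; ring
      · rw [if_neg h2, if_neg (by omega : ¬ k = j + 1)]
        by_cases h0 : j = 0
        · rw [if_pos h0]; ring
        · rw [if_neg h0, if_neg (by omega : ¬ k = j - 1)]; ring
  rw [Finset.sum_congr rfl fun k _ => hsplit k, Finset.sum_add_distrib]
  rw [Finset.sum_ite_eq' (range n) (j+1) (fun _ => -(a (j+1) * todaLf a b i (j+1)))]
  have hB : (if j + 1 ∈ range n then -(a (j+1) * todaLf a b i (j+1)) else 0)
      = -(a (j+1) * todaLf a b i (j+1)) := by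
    split_ifs with h
    · rfl
    · rw [show j + 1 = n by simp only [Finset.mem_range] at h; omega, han]; ring
  rw [hB]
  by_cases h0 : j = 0
  · subst h0
    simp [ha0]
  · simp only [if_neg h0]
    rw [Finset.sum_ite_eq' (range n) (j-1) (fun _ => a j * todaLf a b i (j-1))]
    rw [if_pos (Finset.mem_range.2 (by omega))]
    ring

lemma todaCommVal (a b : ℕ → ℝ) (ha0 : a 0 = 0) (i j : ℕ) :
    a (i+1) * todaLf a b (i+1) j - a i * todaLf a b (i-1) j
      - (a j * todaLf a b i (j-1) - a (j+1) * todaLf a b i (j+1))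
    = if i = j then 2 * ((a (i+1))^2 - (a i)^2)
      else if i + 1 = j then a (i+1) * (b (i+2) - b (i+1))
      else if j + 1 = i then a (j+1) * (b (j+2) - b (j+1))
      else 0 := by
  have e1 : ∀ p q : ℕ, p = q → todaLf a b p q = b (p+1) := by
    intro p q h; unfold todaLf; rw [if_pos h]
  have e2 : ∀ p q : ℕ, p + 1 = q → todaLf a b p q = a (p+1) := by
    intro p q h; unfold todaLf; rw [if_neg (by omega), if_pos h]
  have e3 : ∀ p q : ℕ, q + 1 = p → todaLf a b p q = a (q+1) := by
    intro p q h; unfold todaLf; rw [if_neg (by omega), if_neg (by omega), if_pos h]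
  have e4 : ∀ p q : ℕ, p ≠ q → p + 1 ≠ q → q + 1 ≠ p → todaLf a b p q = 0 := by
    intro p q h h' h''; unfold todaLf; rw [if_neg h, if_neg h', if_neg h'']
  by_cases hij : i = j
  · subst hij
    rw [if_pos rfl, e3 (i+1) i rfl, e2 i (i+1) rfl]
    rcases Nat.eq_zero_or_pos i with h0 | h0
    · subst h0; rw [ha0]; ring
    · rw [e2 (i-1) i (by omega), e3 i (i-1) (by omega), show i - 1 + 1 = i by omega]
      ring
  · rw [if_neg hij]
    by_cases h2 : i + 1 = j
    · subst h2
      rw [if_pos rfl, e1 (i+1) (i+1) rfl, show i + 1 - 1 = i by omega, e1 i i rfl,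
        e4 i (i+1+1) (by omega) (by omega) (by omega)]
      rcases Nat.eq_zero_or_pos i with h0 | h0
      · subst h0; rw [ha0]; ring
      · rw [e4 (i-1) (i+1) (by omega) (by omega) (by omega)]; ring
    · rw [if_neg h2]
      by_cases h3 : j + 1 = i
      · subst h3
        rw [if_pos rfl, show j + 1 - 1 = j by omega, e1 j j rfl,
          e4 (j+1+1) j (by omega) (by omega) (by omega), e1 (j+1) (j+1) rfl]
        rcases Nat.eq_zero_or_pos j with h0 | h0
        · subst h0; rw [ha0]; ring
        · rw [e4 (j+1) (j-1) (by omega) (by omega) (by omega)]; ring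
      · rw [if_neg h3]
        by_cases h4 : i + 2 = j
        · subst h4
          rw [e2 (i+1) (i+2) (by omega), show i + 2 - 1 = i + 1 by omega,
            e2 i (i+1) rfl, e4 (i-1) (i+2) (by omega) (by omega) (by omega),
            e4 i (i+2+1) (by omega) (by omega) (by omega)]
          ring
        · by_cases h5 : j + 2 = i
          · subst h5
            rw [e4 (j+2+1) j (by omega) (by omega) (by omega),
              show j + 2 - 1 = j + 1 by omega,
              e3 (j+1) j rfl, e4 (j+2) (j-1) (by omega) (by omega) (by omega),
              e3 (j+2) (j+1) rfl]
            ring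
          · rw [e4 (i+1) j (by omega) (by omega) (by omega),
              e4 (i-1) j (by omega) (by omega) (by omega),
              e4 i (j-1) (by omega) (by omega) (by omega),
              e4 i (j+1) (by omega) (by omega) (by omega)]
            ring


/-- The Flaschka form of the Toda lattice is equivalent to the Lax equation:
with `L` symmetric tridiagonal (diagonal `b`, off-diagonals `a`) and `B`
skew-symmetric tridiagonal (off-diagonals `±a`), and `a, b` differentiable with
derivatives `a', b'`, one has `L' = BL − LB` (entrywise) if and only if
`ȧ_k = a_k(b_{k+1} − b_k)` for `1 ≤ k ≤ n−1` and `ḃ_k = 2(a_k² − a_{k−1}²)`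
for `1 ≤ k ≤ n`, with the conventions `a_0 = a_n = 0`. -/
theorem stmt_4 {n : ℕ} (hn : 1 ≤ n)
    (a b a' b' : ℝ → ℕ → ℝ)
    (ha' : ∀ (t : ℝ) (k : ℕ), HasDerivAt (fun s => a s k) (a' t k) t)
    (hb' : ∀ (t : ℝ) (k : ℕ), HasDerivAt (fun s => b s k) (b' t k) t)
    (ha0 : ∀ t, a t 0 = 0) (han : ∀ t, a t n = 0)
    (L B : ℝ → Matrix (Fin n) (Fin n) ℝ)
    (hLdef : ∀ (t : ℝ) (i j : Fin n),
      L t i j =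
        if (i : ℕ) = (j : ℕ) then b t ((i : ℕ) + 1)
        else if (i : ℕ) + 1 = (j : ℕ) then a t ((i : ℕ) + 1)
        else if (j : ℕ) + 1 = (i : ℕ) then a t ((j : ℕ) + 1)
        else 0)
    (hBdef : ∀ (t : ℝ) (i j : Fin n),
      B t i j =
        if (i : ℕ) + 1 = (j : ℕ) then a t ((i : ℕ) + 1)
        else if (j : ℕ) + 1 = (i : ℕ) then -(a t ((j : ℕ) + 1))
        else 0) :
    (∀ (t : ℝ) (i j : Fin n),
        HasDerivAt (fun s => L s i j) ((B t * L t - L t * B t) i j) t) ↔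
    (∀ (t : ℝ) (k : ℕ),
        (1 ≤ k → k < n → a' t k = a t k * (b t (k + 1) - b t k)) ∧
        (1 ≤ k → k ≤ n → b' t k = 2 * ((a t k) ^ 2 - (a t (k - 1)) ^ 2))) := by
  have hL' : ∀ (t : ℝ) (i j : Fin n),
      HasDerivAt (fun s => L s i j) (todaLf (a' t) (b' t) (i : ℕ) (j : ℕ)) t := by
    intro t i j
    have hfun : (fun s => L s i j) = fun s => todaLf (a s) (b s) (i : ℕ) (j : ℕ) := by
      funext s; rw [hLdef]; rfl
    rw [hfun]
    unfold todaLf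
    by_cases h1 : (i : ℕ) = (j : ℕ)
    · simp only [if_pos h1]; exact hb' t _
    · simp only [if_neg h1]
      by_cases h2 : (i : ℕ) + 1 = (j : ℕ)
      · simp only [if_pos h2]; exact ha' t _
      · simp only [if_neg h2]
        by_cases h3 : (j : ℕ) + 1 = (i : ℕ)
        · simp only [if_pos h3]; exact ha' t _
        · simp only [if_neg h3]; exact hasDerivAt_const t 0
  have hcomm : ∀ (t : ℝ) (i j : Fin n),
      (B t * L t - L t * B t) i j =
      (if (i : ℕ) = (j : ℕ) then 2 * ((a t ((i:ℕ)+1))^2 - (a t (i:ℕ))^2)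
       else if (i : ℕ) + 1 = (j : ℕ) then
         a t ((i:ℕ)+1) * (b t ((i:ℕ)+2) - b t ((i:ℕ)+1))
       else if (j : ℕ) + 1 = (i : ℕ) then
         a t ((j:ℕ)+1) * (b t ((j:ℕ)+2) - b t ((j:ℕ)+1))
       else 0) := by
    intro t i j
    rw [Matrix.sub_apply, Matrix.mul_apply, Matrix.mul_apply]
    have hB' : ∀ k : Fin n, B t i k * L t k j
        = todaBf (a t) (i : ℕ) (k : ℕ) * todaLf (a t) (b t) (k : ℕ) (j : ℕ) := by
      intro k; rw [hBdef, hLdef]; rfl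
    have hL2 : ∀ k : Fin n, L t i k * B t k j
        = todaLf (a t) (b t) (i : ℕ) (k : ℕ) * todaBf (a t) (k : ℕ) (j : ℕ) := by
      intro k; rw [hBdef, hLdef]; rfl
    rw [Finset.sum_congr rfl fun k _ => hB' k, Finset.sum_congr rfl fun k _ => hL2 k]
    rw [Fin.sum_univ_eq_sum_range
        (fun k => todaBf (a t) (i : ℕ) k * todaLf (a t) (b t) k (j : ℕ)) n]
    rw [Fin.sum_univ_eq_sum_range
        (fun k => todaLf (a t) (b t) (i : ℕ) k * todaBf (a t) k (j : ℕ)) n]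
    rw [todaSumBL n (a t) (b t) (ha0 t) (han t) (i : ℕ) (j : ℕ) i.isLt,
        todaSumLB n (a t) (b t) (ha0 t) (han t) (i : ℕ) (j : ℕ) j.isLt]
    exact todaCommVal (a t) (b t) (ha0 t) (i : ℕ) (j : ℕ)
  constructor
  · intro H t k
    constructor
    · intro hk1 hk2
      have hlt : k - 1 < n := by omega
      have hu := (H t ⟨k-1, hlt⟩ ⟨k, hk2⟩).unique (hL' t ⟨k-1, hlt⟩ ⟨k, hk2⟩)
      rw [hcomm] at hu
      simp only [Fin.val_mk] at hu
      rw [if_neg (by omega : ¬ k - 1 = k), if_pos (by omega : k - 1 + 1 = k)] at hu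
      unfold todaLf at hu
      rw [if_neg (by omega : ¬ k - 1 = k), if_pos (by omega : k - 1 + 1 = k)] at hu
      rw [show k - 1 + 1 = k by omega, show k - 1 + 2 = k + 1 by omega] at hu
      exact hu.symm
    · intro hk1 hk2
      have hlt : k - 1 < n := by omega
      have hu := (H t ⟨k-1, hlt⟩ ⟨k-1, hlt⟩).unique (hL' t ⟨k-1, hlt⟩ ⟨k-1, hlt⟩)
      rw [hcomm] at hu
      simp only [Fin.val_mk] at hu
      rw [if_pos trivial] at hu
      unfold todaLf at hu
      rw [if_pos rfl] at hu
      rw [show k - 1 + 1 = k by omega] at hu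
      exact hu.symm
  · intro H t i j
    have h := hL' t i j
    have hval : (B t * L t - L t * B t) i j
        = todaLf (a' t) (b' t) (i : ℕ) (j : ℕ) := by
      rw [hcomm]
      unfold todaLf
      by_cases h1 : (i : ℕ) = (j : ℕ)
      · rw [if_pos h1, if_pos h1]
        have hb := (H t ((i : ℕ) + 1)).2 (by omega) (by have := i.isLt; omega)
        rw [hb, show (i : ℕ) + 1 - 1 = (i : ℕ) by omega]
      · rw [if_neg h1, if_neg h1]
        by_cases hc2 : (i : ℕ) + 1 = (j : ℕ)
        · rw [if_pos hc2, if_pos hc2]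
          have hA := (H t ((i : ℕ) + 1)).1 (by omega) (by have := j.isLt; omega)
          rw [hA, show (i : ℕ) + 1 + 1 = (i : ℕ) + 2 by omega]
        · rw [if_neg hc2, if_neg hc2]
          by_cases hc3 : (j : ℕ) + 1 = (i : ℕ)
          · rw [if_pos hc3, if_pos hc3]
            have hA := (H t ((j : ℕ) + 1)).1 (by omega) (by have := i.isLt; omega)
            rw [hA, show (j : ℕ) + 1 + 1 = (j : ℕ) + 2 by omega]
          · rw [if_neg hc3, if_neg hc3]
    rw [hval]
    exact h
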